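/- If 0 ≤ f₁ ≤ f₂ ≤ … ≤ f_N < 1, then (∑_{i=1}^N f_i (1-f_i)^{-1}) / (∑_{i=1}^N (1 + f_i (1-f_i)^{-1})) ≥ (∑_{i=1}^N f_i)/N, i.e., the average-case N lower bound f_a is at least the oracle bound f_o. -/

import Mathlib

/-- If 0 ≤ f₁ ≤ ⋯ ≤ f_N < 1 then the average-case N lower bound
f_a = (∑ f_i/(1-f_i)) / (∑ (1 + f_i/(1-f_i))) is at least the oracle
bound f_o = (∑ f_i)/N. -/
theorem stmt_4 (N : ℕ) (hN : 1 ≤ N) (f : ℕ → ℝ)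
    (h0 : ∀ i, 1 ≤ i → i ≤ N → 0 ≤ f i)
    (h1 : ∀ i, 1 ≤ i → i ≤ N → f i < 1)
    (hmono : ∀ i, 1 ≤ i → i + 1 ≤ N → f i ≤ f (i + 1)) :
    (∑ i ∈ Finset.Icc 1 N, f i * (1 - f i)⁻¹) /
        (∑ i ∈ Finset.Icc 1 N, (1 + f i * (1 - f i)⁻¹)) ≥
      (∑ i ∈ Finset.Icc 1 N, f i) / N := by
  set s := Finset.Icc 1 N with hs
  have hmem : ∀ i ∈ s, 1 ≤ i ∧ i ≤ N := by
    intro i hi; exact Finset.mem_Icc.mp hi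
  have hpos : ∀ i ∈ s, 0 < 1 - f i := by
    intro i hi; obtain ⟨h1i, h2i⟩ := hmem i hi; linarith [h1 i h1i h2i]
  -- rewrite denominator
  have hden : ∑ i ∈ s, (1 + f i * (1 - f i)⁻¹) = ∑ i ∈ s, (1 - f i)⁻¹ := by
    apply Finset.sum_congr rfl
    intro i hi
    have := hpos i hi
    field_simp
    ring
  have hcard : (s.card : ℝ) = N := by
    rw [hs, Nat.card_Icc]; simp
  have hsne : s.Nonempty := by
    rw [hs]; exact ⟨1, Finset.mem_Icc.mpr ⟨le_refl 1, hN⟩⟩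
  have hUpos : 0 < ∑ i ∈ s, (1 - f i)⁻¹ := by
    apply Finset.sum_pos
    · intro i hi; exact inv_pos.mpr (hpos i hi)
    · exact hsne
  have hNpos : (0 : ℝ) < N := by exact_mod_cast hN
  have hmv : MonovaryOn f (fun i => (1 - f i)⁻¹) s := by
    intro i hi j hj hgij
    by_contra hc
    push_neg at hc
    have : (1 - f j)⁻¹ < (1 - f i)⁻¹ :=
      (inv_lt_inv₀ (hpos j hj) (hpos i hi)).mpr (by linarith)
    simp only at hgij
    linarith
  have cheb := hmv.sum_mul_sum_le_card_mul_sum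
  rw [hden, ge_iff_le, div_le_div_iff₀ hNpos hUpos]
  calc (∑ i ∈ s, f i) * ∑ i ∈ s, (1 - f i)⁻¹
      ≤ s.card * ∑ i ∈ s, f i * (1 - f i)⁻¹ := cheb
    _ = (∑ i ∈ s, f i * (1 - f i)⁻¹) * N := by rw [hcard]; ring
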